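/- Let a > 0, b ≥ 0, d > 0 and κ > 1 be real numbers such that a > (2b/d)^{1/κ}. Suppose that for some T > 0 the function y : [0,T) → ℝ is continuous, nonnegative, and satisfies y(t) ≥ a − b·t + d·∫₀ᵗ y(s)^κ ds for all t ∈ (0,T). Then necessarily T ≤ 2/((κ−1)·a^{κ−1}·d). -/

import Mathlib

open Set intervalIntegral

theorem stmt_0 (a b d κ : ℝ) (ha : 0 < a) (hb : 0 ≤ b) (hd : 0 < d) (hκ : 1 < κ)
    (hcond : a > (2 * b / d) ^ (1 / κ)) (T : ℝ) (hT : 0 < T) (y : ℝ → ℝ)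
    (hy_cont : ContinuousOn y (Set.Ico 0 T))
    (hy_nonneg : ∀ t ∈ Set.Ico (0 : ℝ) T, 0 ≤ y t)
    (hy_ineq : ∀ t ∈ Set.Ioo (0 : ℝ) T,
      y t ≥ a - b * t + d * ∫ s in (0 : ℝ)..t, y s ^ κ) :
    T ≤ 2 / ((κ - 1) * a ^ (κ - 1) * d) := by
  by_contra hcon
  push_neg at hcon
  have hκ0 : (0:ℝ) < κ := by linarith
  have hκ1 : (0:ℝ) < κ - 1 := by linarith
  have hapow : 0 < a ^ (κ - 1) := Real.rpow_pos_of_pos ha _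
  set T' : ℝ := 2 / ((κ - 1) * a ^ (κ - 1) * d) with hT'def
  have hT'pos : 0 < T' := by positivity
  set t₀ : ℝ := (T' + T) / 2 with ht₀def
  have hT't₀ : T' < t₀ := by simp only [ht₀def]; linarith
  have ht₀T : t₀ < T := by simp only [ht₀def]; linarith
  have ht₀pos : 0 < t₀ := hT'pos.trans hT't₀
  -- basic: 2*b < d * a^κ
  have h2bd : 0 ≤ 2 * b / d := by positivity
  have hba : 2 * b < d * a ^ κ := by
    have h1 : 2 * b / d < a ^ κ := by
      calc 2 * b / d = ((2 * b / d) ^ (1/κ)) ^ κ := by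
            rw [← Real.rpow_mul h2bd, one_div_mul_cancel hκ0.ne', Real.rpow_one]
        _ < a ^ κ := Real.rpow_lt_rpow (Real.rpow_nonneg h2bd _) hcond hκ0
    have := (div_lt_iff₀ hd).mp h1
    linarith
  -- continuity and integrability of y^κ
  have hyk_cont : ContinuousOn (fun s => y s ^ κ) (Set.Ico 0 T) :=
    hy_cont.rpow_const fun x _ => Or.inr hκ0.le
  have hyk_meas : MeasureTheory.AEStronglyMeasurable (fun s => y s ^ κ)
      (MeasureTheory.volume.restrict (Set.Ico 0 T)) :=
    hyk_cont.aestronglyMeasurable measurableSet_Ico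
  have hint : ∀ u, 0 ≤ u → u < T → IntervalIntegrable (fun s => y s ^ κ)
      MeasureTheory.volume 0 u := by
    intro u hu huT
    apply ContinuousOn.intervalIntegrable
    apply hyk_cont.mono
    rw [Set.uIcc_of_le hu]
    exact fun s hs => ⟨hs.1, lt_of_le_of_lt hs.2 huT⟩
  set z : ℝ → ℝ := fun t => a - b * t + d * ∫ s in (0 : ℝ)..t, y s ^ κ with hzdef
  have hz0 : z 0 = a := by simp [hzdef]
  have hyz : ∀ t ∈ Set.Ioo (0:ℝ) T, z t ≤ y t := by
    intro t ht
    simpa only [hzdef] using hy_ineq t ht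
  -- right derivative of z everywhere on [0, T)
  have hz_deriv : ∀ x, 0 ≤ x → x < T →
      HasDerivWithinAt z (-b + d * y x ^ κ) (Set.Ici x) x := by
    intro x hx hxT
    have hmem : Set.Ico 0 T ∈ nhdsWithin x (Set.Ioi x) :=
      Filter.mem_of_superset (Ioo_mem_nhdsGT_of_mem ⟨le_refl x, hxT⟩)
        fun s hs => ⟨hx.trans hs.1.le, hs.2⟩
    have hmeasAt : StronglyMeasurableAtFilter (fun s => y s ^ κ)
        (nhdsWithin x (Set.Ioi x)) MeasureTheory.volume :=
      ⟨Set.Ico 0 T, hmem, hyk_meas⟩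
    have hcontAt : ContinuousWithinAt (fun s => y s ^ κ) (Set.Ioi x) x :=
      (hyk_cont x ⟨hx, hxT⟩).mono_of_mem_nhdsWithin hmem
    have hInt : HasDerivWithinAt (fun u => ∫ s in (0:ℝ)..u, y s ^ κ) (y x ^ κ)
        (Set.Ici x) x :=
      intervalIntegral.integral_hasDerivWithinAt_right (hint x hx hxT) hmeasAt hcontAt
    have h1 : HasDerivWithinAt (fun t => a - b * t) (-b) (Set.Ici x) x := by
      simpa using ((hasDerivWithinAt_id x (Set.Ici x)).const_mul b).const_sub a
    exact h1.add (hInt.const_mul d)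
  -- full derivative of z at interior points
  have hz_derivAt : ∀ x ∈ Set.Ioo (0:ℝ) T, HasDerivAt z (-b + d * y x ^ κ) x := by
    intro x hx
    have hmem : Set.Ico 0 T ∈ nhds x := Ico_mem_nhds hx.1 hx.2
    have hmeasAt : StronglyMeasurableAtFilter (fun s => y s ^ κ)
        (nhds x) MeasureTheory.volume := ⟨Set.Ico 0 T, hmem, hyk_meas⟩
    have hcontAt : ContinuousAt (fun s => y s ^ κ) x :=
      (hyk_cont x ⟨hx.1.le, hx.2⟩).continuousAt hmem
    have hInt : HasDerivAt (fun u => ∫ s in (0:ℝ)..u, y s ^ κ) (y x ^ κ) x :=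
      intervalIntegral.integral_hasDerivAt_right (hint x hx.1.le hx.2) hmeasAt hcontAt
    have h1 : HasDerivAt (fun t => a - b * t) (-b) x := by
      simpa using ((hasDerivAt_id x).const_mul b).const_sub a
    exact h1.add (hInt.const_mul d)
  have hz_cont : ContinuousOn z (Set.Icc 0 t₀) := by
    intro x hx
    rcases eq_or_lt_of_le hx.1 with rfl | hx0
    · exact ((hz_deriv 0 le_rfl hT).continuousWithinAt).mono
        (fun s hs => hs.1)
    · exact ((hz_derivAt x ⟨hx0, lt_of_le_of_lt hx.2 ht₀T⟩).continuousAt).continuousWithinAt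
  -- y 0 ≥ a
  have hy0 : a ≤ y 0 := by
    have hIcc_mem : Set.Icc (0:ℝ) t₀ ∈ nhdsWithin (0:ℝ) (Set.Ioi 0) :=
      Filter.mem_of_superset (Ioo_mem_nhdsGT_of_mem ⟨le_refl (0:ℝ), ht₀pos⟩)
        fun s hs => ⟨hs.1.le, hs.2.le⟩
    have hIco_mem : Set.Ico (0:ℝ) T ∈ nhdsWithin (0:ℝ) (Set.Ioi 0) :=
      Filter.mem_of_superset (Ioo_mem_nhdsGT_of_mem ⟨le_refl (0:ℝ), hT⟩)
        fun s hs => ⟨hs.1.le, hs.2⟩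
    have htz : Filter.Tendsto z (nhdsWithin (0:ℝ) (Set.Ioi 0)) (nhds a) := by
      have h := (hz_cont 0 ⟨le_rfl, ht₀pos.le⟩).tendsto
      rw [hz0] at h
      exact h.mono_left (nhdsWithin_le_of_mem hIcc_mem)
    have hty : Filter.Tendsto y (nhdsWithin (0:ℝ) (Set.Ioi 0)) (nhds (y 0)) :=
      (hy_cont 0 ⟨le_rfl, hT⟩).mono_left (nhdsWithin_le_of_mem hIco_mem)
    refine le_of_tendsto_of_tendsto htz hty ?_
    filter_upwards [Ioo_mem_nhdsGT_of_mem (Set.mem_Ico.mpr ⟨le_refl (0:ℝ), hT⟩)] with t ht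
    exact hyz t ht
  -- a ≤ z on [0, t₀]
  have hza : ∀ x ∈ Set.Icc (0:ℝ) t₀, a ≤ z x := by
    have c1 : ContinuousOn (fun t => a - z t) (Set.Icc 0 t₀) := continuousOn_const.sub hz_cont
    have c2 : ∀ x ∈ Set.Ico (0:ℝ) t₀, HasDerivWithinAt (fun t => a - z t)
        ((fun t => -(-b + d * y t ^ κ)) x) (Set.Ici x) x := by
      intro x hx
      exact ((hz_deriv x hx.1 (lt_of_lt_of_le hx.2 ht₀T.le)).const_sub a)
    have c3 : (fun t => a - z t) 0 ≤ (fun _ => (0:ℝ)) 0 := by simp [hz0]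
    have c4 : ∀ x : ℝ, HasDerivAt (fun _ => (0:ℝ)) ((fun _ => (0:ℝ)) x) x :=
      fun x => hasDerivAt_const x 0
    have c5 : ∀ x ∈ Set.Ico (0:ℝ) t₀, (fun t => a - z t) x = (fun _ => (0:ℝ)) x →
        (fun t => -(-b + d * y t ^ κ)) x < (fun _ => (0:ℝ)) x := by
      intro x hx hfx
      have hfx' : a - z x = 0 := hfx
      have hzx : z x = a := by linarith
      have hyx : a ≤ y x := by
        rcases eq_or_lt_of_le hx.1 with rfl | hx0
        · exact hy0
        · rw [← hzx]; exact hyz x ⟨hx0, hx.2.trans ht₀T⟩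
      have hpow : a ^ κ ≤ y x ^ κ := Real.rpow_le_rpow ha.le hyx hκ0.le
      have hdy : d * a ^ κ ≤ d * y x ^ κ := mul_le_mul_of_nonneg_left hpow hd.le
      show -(-b + d * y x ^ κ) < 0
      linarith
    have key := image_le_of_deriv_right_lt_deriv_boundary c1 c2 c3 c4 c5
    intro x hx
    have := key hx
    simpa using sub_nonpos.mp (by simpa using this)
  have hzpos : ∀ x ∈ Set.Icc (0:ℝ) t₀, 0 < z x := fun x hx => ha.trans_le (hza x hx)
  -- the function g
  set g : ℝ → ℝ := fun t => z t ^ (1 - κ) + (κ - 1) * (d / 2) * t with hgdef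
  have hg_deriv : ∀ x ∈ Set.Ioo (0:ℝ) t₀, HasDerivAt g
      ((-b + d * y x ^ κ) * (1 - κ) * z x ^ (1 - κ - 1) + (κ - 1) * (d / 2)) x := by
    intro x hx
    have hx' : x ∈ Set.Icc (0:ℝ) t₀ := ⟨hx.1.le, hx.2.le⟩
    have h1 : HasDerivAt (fun t => z t ^ (1 - κ))
        ((-b + d * y x ^ κ) * (1 - κ) * z x ^ (1 - κ - 1)) x :=
      (hz_derivAt x ⟨hx.1, hx.2.trans ht₀T⟩).rpow_const (Or.inl (hzpos x hx').ne')
    have h2 : HasDerivAt (fun t : ℝ => (κ - 1) * (d / 2) * t) ((κ - 1) * (d / 2)) x := by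
      simpa using (hasDerivAt_id x).const_mul ((κ - 1) * (d / 2))
    exact h1.add h2
  have hg_nonpos : ∀ x ∈ Set.Ioo (0:ℝ) t₀,
      (-b + d * y x ^ κ) * (1 - κ) * z x ^ (1 - κ - 1) + (κ - 1) * (d / 2) ≤ 0 := by
    intro x hx
    have hx' : x ∈ Set.Icc (0:ℝ) t₀ := ⟨hx.1.le, hx.2.le⟩
    have hca : a ≤ z x := hza x hx'
    have hcpos : 0 < z x := hzpos x hx'
    have hyx : z x ≤ y x := hyz x ⟨hx.1, hx.2.trans ht₀T⟩
    have hpow1 : z x ^ κ ≤ y x ^ κ := Real.rpow_le_rpow hcpos.le hyx hκ0.le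
    have hpow2 : a ^ κ ≤ z x ^ κ := Real.rpow_le_rpow ha.le hca hκ0.le
    have hz' : d * z x ^ κ / 2 ≤ -b + d * y x ^ κ := by
      have h1 : d * z x ^ κ ≤ d * y x ^ κ := mul_le_mul_of_nonneg_left hpow1 hd.le
      have h2 : d * a ^ κ ≤ d * z x ^ κ := mul_le_mul_of_nonneg_left hpow2 hd.le
      linarith
    have hnegpow : 0 < z x ^ (-κ) := Real.rpow_pos_of_pos hcpos _
    have hcc : z x ^ κ * z x ^ (-κ) = 1 := by
      rw [← Real.rpow_add hcpos, add_neg_cancel, Real.rpow_zero]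
    have hexp : (1 : ℝ) - κ - 1 = -κ := by ring
    rw [hexp]
    have hmul : d * z x ^ κ / 2 * z x ^ (-κ) ≤ (-b + d * y x ^ κ) * z x ^ (-κ) :=
      mul_le_mul_of_nonneg_right hz' hnegpow.le
    have e1 : d * z x ^ κ / 2 * z x ^ (-κ) = d / 2 := by
      rw [div_mul_eq_mul_div, mul_assoc, hcc, mul_one]
    have hAu : d / 2 ≤ (-b + d * y x ^ κ) * z x ^ (-κ) := e1 ▸ hmul
    nlinarith [mul_le_mul_of_nonneg_left hAu hκ1.le]
  have hg_cont : ContinuousOn g (Set.Icc 0 t₀) := by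
    apply ContinuousOn.add
    · exact hz_cont.rpow_const fun x hx => Or.inl (hzpos x hx).ne'
    · exact (continuous_const.mul continuous_id).continuousOn
  have hg_anti : AntitoneOn g (Set.Icc 0 t₀) := by
    apply antitoneOn_of_deriv_nonpos (convex_Icc 0 t₀) hg_cont
    · intro x hx
      rw [interior_Icc] at hx
      exact (hg_deriv x hx).differentiableAt.differentiableWithinAt
    · intro x hx
      rw [interior_Icc] at hx
      rw [(hg_deriv x hx).deriv]
      exact hg_nonpos x hx
  have hfin : g t₀ ≤ g 0 :=
    hg_anti ⟨le_rfl, ht₀pos.le⟩ ⟨ht₀pos.le, le_rfl⟩ ht₀pos.le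
  have hg0 : g 0 = a ^ (1 - κ) := by simp [hgdef, hz0]
  have hzt₀pos : 0 < z t₀ ^ (1 - κ) :=
    Real.rpow_pos_of_pos (hzpos t₀ ⟨ht₀pos.le, le_rfl⟩) _
  have ha1κ : a ^ (1 - κ) = (a ^ (κ - 1))⁻¹ := by
    rw [show (1 - κ) = -(κ - 1) by ring, Real.rpow_neg ha.le]
  have hT'eq : (κ - 1) * (d / 2) * T' = (a ^ (κ - 1))⁻¹ := by
    rw [hT'def]
    field_simp
  have hlt : a ^ (1 - κ) < (κ - 1) * (d / 2) * t₀ := by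
    rw [ha1κ, ← hT'eq]
    have : 0 < (κ - 1) * (d / 2) := by positivity
    exact mul_lt_mul_of_pos_left hT't₀ this
  have hgt₀ : g t₀ = z t₀ ^ (1 - κ) + (κ - 1) * (d / 2) * t₀ := rfl
  rw [hgt₀, hg0] at hfin
  linarith
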